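/- If Δ ∘ L^n ∘ Δ⊥ ∘ L ∘ Δ = 0 for all n ∈ ℕ, then L_pc ∘ L_cc^j ∘ L_cp = 0 for all j ∈ ℕ. -/
import Mathlib


/-- If `Δ ∘ L^n ∘ Δ⊥ ∘ L ∘ Δ = 0` for all `n ∈ ℕ`, then
`L_pc ∘ L_cc^j ∘ L_cp = 0` for all `j ∈ ℕ`. -/
theorem ncgd_backwards (V : Type*) [AddCommGroup V] [Module ℂ V] [FiniteDimensional ℂ V]
    (L Δ : Module.End ℂ V) (hΔ : Δ * Δ = Δ)
    (h : ∀ n : ℕ, Δ * L ^ n * (1 - Δ) * L * Δ = 0) :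
    ∀ j : ℕ, (Δ * L * (1 - Δ)) * ((1 - Δ) * L * (1 - Δ)) ^ j * ((1 - Δ) * L * Δ) = 0 := by
  set E : Module.End ℂ V := 1 - Δ with hE
  have hEE : E * E = E := by
    rw [hE, mul_sub, sub_mul, sub_mul, mul_one, one_mul, hΔ]; abel
  -- key lemma
  have key : ∀ j n : ℕ, Δ * L ^ n * E * (L * E) ^ j * (L * Δ) = 0 := by
    intro j
    induction j with
    | zero =>
      intro n
      have := h n
      simpa [mul_assoc] using this
    | succ j ih =>
      intro n
      have e1 : Δ * L ^ (n + 1) * E * (L * E) ^ j * (L * Δ) = 0 := ih (n + 1)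
      have e2 : Δ * L * E * (L * E) ^ j * (L * Δ) = 0 := by
        have := ih 1
        simpa using this
      have e3 : Δ * L ^ n * Δ * L * E * (L * E) ^ j * (L * Δ) = 0 := by
        calc Δ * L ^ n * Δ * L * E * (L * E) ^ j * (L * Δ)
            = Δ * L ^ n * (Δ * Δ) * L * E * (L * E) ^ j * (L * Δ) := by rw [hΔ]
          _ = Δ * L ^ n * Δ * (Δ * L * E * (L * E) ^ j * (L * Δ)) := by
              simp only [mul_assoc]
          _ = 0 := by rw [e2, mul_zero]
      have expand : Δ * L ^ n * E * (L * E) ^ (j + 1) * (L * Δ)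
          = Δ * L ^ (n + 1) * E * (L * E) ^ j * (L * Δ)
            - Δ * L ^ n * Δ * L * E * (L * E) ^ j * (L * Δ) := by
        rw [pow_succ' (L * E) j, pow_succ L n, hE]
        noncomm_ring
      rw [expand, e1, e3, sub_zero]
  intro j
  -- collapse the E's
  have collapse : ∀ j : ℕ, E * (E * L * E) ^ j * E = E * (L * E) ^ j := by
    intro j
    induction j with
    | zero => simpa using hEE
    | succ j ih =>
      rw [pow_succ (E * L * E) j, pow_succ (L * E) j]
      calc E * ((E * L * E) ^ j * (E * L * E)) * E
          = E * (E * L * E) ^ j * E * L * (E * E) := by simp only [mul_assoc]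
        _ = E * (L * E) ^ j * (L * E) := by rw [hEE, ih, mul_assoc]
        _ = E * ((L * E) ^ j * (L * E)) := by rw [mul_assoc]
  have goal : Δ * L * E * (E * L * E) ^ j * (E * L * Δ)
      = Δ * L ^ 1 * E * (L * E) ^ j * (L * Δ) := by
    rw [pow_one]
    calc Δ * L * E * (E * L * E) ^ j * (E * L * Δ)
        = Δ * L * (E * (E * L * E) ^ j * E) * (L * Δ) := by simp only [mul_assoc]
      _ = Δ * L * (E * (L * E) ^ j) * (L * Δ) := by rw [collapse j]
      _ = Δ * L * E * (L * E) ^ j * (L * Δ) := by simp only [mul_assoc]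
  calc Δ * L * E * (E * L * E) ^ j * (E * L * Δ)
      = Δ * L ^ 1 * E * (L * E) ^ j * (L * Δ) := goal
    _ = 0 := key j 1
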